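/- Let F_k denote the k-th Fibonacci number (F₁ = F₂ = 1, F_{k+2} = F_{k+1} + F_k). For every integer n ≥ 1, the triple (p, q, r) = (F_{2n+1}, F_{2n+2}, F_{2n+3}) satisfies pq + pr − qr = 1, and F_{2n+1}, F_{2n+2}, F_{2n+3} are pairwise relatively prime. -/
import Mathlib

lemma cassini_even (n : ℕ) :
    (Nat.fib (2 * n + 1) : ℤ) * (Nat.fib (2 * n + 3) : ℤ) -
      (Nat.fib (2 * n + 2) : ℤ) ^ 2 = 1 := by
  induction n with
  | zero => norm_num [Nat.fib]
  | succ k ih =>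
    have h1 : (Nat.fib (2 * k + 3) : ℤ) = Nat.fib (2 * k + 2) + Nat.fib (2 * k + 1) := by
      rw [show 2 * k + 3 = (2 * k + 1) + 2 from rfl, Nat.fib_add_two]; push_cast; ring
    have h2 : (Nat.fib (2 * k + 4) : ℤ) = Nat.fib (2 * k + 3) + Nat.fib (2 * k + 2) := by
      rw [show 2 * k + 4 = (2 * k + 2) + 2 from rfl, Nat.fib_add_two]; push_cast; ring
    have h3 : (Nat.fib (2 * k + 5) : ℤ) = Nat.fib (2 * k + 4) + Nat.fib (2 * k + 3) := by
      rw [show 2 * k + 5 = (2 * k + 3) + 2 from rfl, Nat.fib_add_two]; push_cast; ring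
    have : 2 * (k + 1) + 1 = 2 * k + 3 := by ring
    rw [this, show 2 * (k + 1) + 3 = 2 * k + 5 from by ring,
      show 2 * (k + 1) + 2 = 2 * k + 4 from by ring]
    rw [h3, h2, h1]
    linear_combination ih - (Nat.fib (2*k+1) : ℤ) * h1

/-- Let `F_k` be the `k`-th Fibonacci number (`F₁ = F₂ = 1`,
`F_{k+2} = F_{k+1} + F_k`). For every `n ≥ 1`, the triple
`(p,q,r) = (F_{2n+1}, F_{2n+2}, F_{2n+3})` satisfies `pq + pr − qr = 1` and consists of
pairwise relatively prime numbers. -/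
theorem stmt_3 (n : ℕ) (hn : 1 ≤ n) :
    ((Nat.fib (2 * n + 1) : ℤ) * (Nat.fib (2 * n + 2) : ℤ) +
      (Nat.fib (2 * n + 1) : ℤ) * (Nat.fib (2 * n + 3) : ℤ) -
      (Nat.fib (2 * n + 2) : ℤ) * (Nat.fib (2 * n + 3) : ℤ) = 1) ∧
    Nat.Coprime (Nat.fib (2 * n + 1)) (Nat.fib (2 * n + 2)) ∧
    Nat.Coprime (Nat.fib (2 * n + 1)) (Nat.fib (2 * n + 3)) ∧
    Nat.Coprime (Nat.fib (2 * n + 2)) (Nat.fib (2 * n + 3)) := by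
  have h3 : (Nat.fib (2 * n + 3) : ℤ) = Nat.fib (2 * n + 2) + Nat.fib (2 * n + 1) := by
    rw [show 2 * n + 3 = (2 * n + 1) + 2 from rfl, Nat.fib_add_two]; push_cast; ring
  refine ⟨?_, Nat.fib_coprime_fib_succ _, ?_, Nat.fib_coprime_fib_succ _⟩
  · have hc := cassini_even n
    rw [h3] at hc ⊢
    linear_combination hc
  · have := Nat.fib_gcd (2 * n + 1) (2 * n + 3)
    have hg : Nat.gcd (2 * n + 1) (2 * n + 3) = 1 := by
      set g := Nat.gcd (2 * n + 1) (2 * n + 3) with hgdef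
      have h1 : g ∣ 2 * n + 1 := Nat.gcd_dvd_left _ _
      have h2 : g ∣ 2 * n + 3 := Nat.gcd_dvd_right _ _
      have hd : g ∣ 2 := by
        have := Nat.dvd_sub h2 h1
        simpa using this
      have hle : g ≤ 2 := Nat.le_of_dvd (by norm_num) hd
      have hpos : 0 < g := Nat.gcd_pos_of_pos_left _ (by omega)
      interval_cases g
      · rfl
      · exfalso; omega
    rw [Nat.Coprime, ← this, hg, Nat.fib_one]
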